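/- Let p and q be primes with p = vq + 1 for some integer v ≥ 2. The number of permutations π of {1,...,p-1} such that the reduced sequence π_v has least period strictly less than p-1 equals v! · (q!)^v. -/

import Mathlib

open Finset Equiv

private lemma aux_mod_succ {v : ℕ} (hv : 0 < v) (a b : ℕ) :
    (a + 1) % v = (b + 1) % v ↔ a % v = b % v := by
  have key : ∀ c : ℕ, ((c + 1) % v + (v - 1)) % v = c % v := by
    intro c
    rw [Nat.mod_add_mod]
    have h : c + 1 + (v - 1) = c + v := by omega
    rw [h, Nat.add_mod_right]
  constructor
  · intro h
    rw [← key a, ← key b, h]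
  · intro h
    rw [Nat.add_mod a, h, ← Nat.add_mod]

private lemma aux_per (f : ℕ → ℕ) {d : ℕ} (hf : ∀ i, f (i + d) = f i) :
    ∀ k i, f (i + k * d) = f i
  | 0, i => by simp
  | k + 1, i => by
    rw [Nat.succ_mul, ← Nat.add_assoc, hf, aux_per f hf k i]

private lemma aux_count (f : ℕ → ℕ) {d : ℕ} (hf : ∀ i, f (i + d) = f i) (r : ℕ) :
    ∀ m, ((Finset.range (m * d)).filter (fun i => f i = r)).card
        = m * ((Finset.range d).filter (fun i => f i = r)).card := by
  intro m
  induction m with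
  | zero => simp
  | succ m ih =>
    have h1 : (m + 1) * d = m * d + d := by ring
    have hdisj : Disjoint
        ((Finset.range (m * d)).filter (fun i => f i = r))
        (((Finset.range d).map (addLeftEmbedding (m * d))).filter (fun i => f i = r)) := by
      rw [Finset.disjoint_left]
      intro a ha hb
      rw [Finset.mem_filter, Finset.mem_range] at ha
      rw [Finset.mem_filter, Finset.mem_map] at hb
      obtain ⟨⟨x, -, hx⟩, -⟩ := hb
      simp only [addLeftEmbedding_apply] at hx
      omega
    rw [h1, Finset.range_add, Finset.filter_union, Finset.card_union_of_disjoint hdisj, ih,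
      Finset.filter_map, Finset.card_map]
    have hcong : (Finset.range d).filter ((fun i => f i = r) ∘ (addLeftEmbedding (m * d)))
        = (Finset.range d).filter (fun i => f i = r) := by
      apply Finset.filter_congr
      intro x _
      have hx : f (m * d + x) = f x := by
        rw [Nat.add_comm]; exact aux_per f hf m x
      simp [addLeftEmbedding_apply, hx]
    rw [hcong]
    ring

private def posE (v q : ℕ) (hv : 0 < v) : Fin (v * q) ≃ Fin v × Fin q where
  toFun i := (⟨i.val % v, Nat.mod_lt _ hv⟩, ⟨i.val / v, by
    rw [Nat.div_lt_iff_lt_mul hv]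
    exact lt_of_lt_of_eq i.isLt (Nat.mul_comm v q)⟩)
  invFun x := ⟨x.1.val + v * x.2.val, by
    have h1 := x.1.isLt; have h2 := x.2.isLt
    calc x.1.val + v * x.2.val < v + v * x.2.val := by omega
    _ = v * (x.2.val + 1) := by ring
    _ ≤ v * q := Nat.mul_le_mul_left _ h2⟩
  left_inv i := Fin.ext (by simpa using Nat.mod_add_div _ _)
  right_inv x := by
    refine Prod.ext (Fin.ext ?_) (Fin.ext ?_)
    · show (x.1.val + v * x.2.val) % v = x.1.val
      rw [Nat.add_mul_mod_self_left, Nat.mod_eq_of_lt x.1.isLt]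
    · show (x.1.val + v * x.2.val) / v = x.2.val
      rw [Nat.add_mul_div_left _ _ hv, Nat.div_eq_of_lt x.1.isLt, Nat.zero_add]

private lemma posE_fst (v q : ℕ) (hv : 0 < v) (i : Fin (v * q)) :
    ((posE v q hv i).1 : ℕ) = (i : ℕ) % v := rfl

private lemma count_R (v q : ℕ) (hv : 0 < v) (hq : 0 < q) :
    Nat.card {ρ : Equiv.Perm (Fin v × Fin q) //
        ∀ x y : Fin v × Fin q, x.1 = y.1 → (ρ x).1 = (ρ y).1} =
      v.factorial * q.factorial ^ v := by
  classical
  set b0 : Fin q := ⟨0, hq⟩ with hb0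
  set Ψ : Equiv.Perm (Fin v) × (Fin v → Equiv.Perm (Fin q)) →
      {ρ : Equiv.Perm (Fin v × Fin q) // ∀ x y : Fin v × Fin q, x.1 = y.1 → (ρ x).1 = (ρ y).1} :=
    fun st => ⟨Equiv.prodShear st.1 st.2, by
      intro x y h
      simp [Equiv.prodShear_apply, h]⟩ with hΨ
  have hinj : Function.Injective Ψ := by
    rintro ⟨σ, τ⟩ ⟨σ', τ'⟩ hab
    have h1 : Equiv.prodShear σ τ = Equiv.prodShear σ' τ' := congrArg Subtype.val hab
    have h2 : ∀ x : Fin v × Fin q, (σ x.1, τ x.1 x.2) = (σ' x.1, τ' x.1 x.2) := by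
      intro x
      have h3 := DFunLike.congr_fun h1 x
      simpa [Equiv.prodShear_apply] using h3
    have hσ : σ = σ' := Equiv.ext fun c => (Prod.ext_iff.mp (h2 (c, b0))).1
    have hτ : τ = τ' := funext fun c => Equiv.ext fun b => (Prod.ext_iff.mp (h2 (c, b))).2
    simp [Prod.ext_iff, hσ, hτ]
  have hsurj : Function.Surjective Ψ := by
    rintro ⟨ρ, hρ⟩
    have hg : Function.Surjective (fun a : Fin v => (ρ (a, b0)).1) := by
      intro c
      refine ⟨(ρ.symm (c, b0)).1, ?_⟩
      have h := hρ ((ρ.symm (c, b0)).1, b0) (ρ.symm (c, b0)) rfl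
      rw [Equiv.apply_symm_apply] at h
      exact h
    have hgbij := (Finite.surjective_iff_bijective).mp hg
    have hτb : ∀ a : Fin v, Function.Bijective (fun b : Fin q => (ρ (a, b)).2) := by
      intro a
      rw [← Finite.injective_iff_bijective]
      intro b b' hbb
      have h1 : (ρ (a, b)).1 = (ρ (a, b')).1 := hρ _ _ rfl
      have h2 : ρ (a, b) = ρ (a, b') := Prod.ext h1 hbb
      have h3 := ρ.injective h2
      exact congrArg Prod.snd h3
    refine ⟨(Equiv.ofBijective _ hgbij, fun a => Equiv.ofBijective _ (hτb a)), ?_⟩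
    apply Subtype.ext
    apply Equiv.ext
    rintro ⟨a, b⟩
    have h1 : (ρ (a, b0)).1 = (ρ (a, b)).1 := hρ _ _ rfl
    show Equiv.prodShear _ _ (a, b) = ρ (a, b)
    rw [Equiv.prodShear_apply]
    exact Prod.ext (by simpa using h1) rfl
  rw [← Nat.card_congr (Equiv.ofBijective Ψ ⟨hinj, hsurj⟩)]
  simp [Nat.card_eq_fintype_card, Fintype.card_prod, Fintype.card_fun, Fintype.card_perm,
    Fintype.card_fin]

private theorem key (q v n : ℕ) (hq : q.Prime) (hv : 2 ≤ v) (hn : n = v * q) (hn0 : 0 < n) :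
    Nat.card {π : Equiv.Perm (Fin n) //
        ∃ N : ℕ, 0 < N ∧ N < n ∧
          ∀ i : ℕ,
            ((π ⟨(i + N) % n, Nat.mod_lt _ hn0⟩).val + 1) % v =
              ((π ⟨i % n, Nat.mod_lt _ hn0⟩).val + 1) % v} =
      v.factorial * q.factorial ^ v := by
  subst hn
  have hq2 := hq.two_le
  have hv0 : 0 < v := by omega
  have hq0 : 0 < q := by omega
  classical
  -- Step 1: the existential condition is equivalent to Q
  have hCQ : ∀ π : Equiv.Perm (Fin (v * q)),
      (∃ N : ℕ, 0 < N ∧ N < v * q ∧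
          ∀ i : ℕ,
            ((π ⟨(i + N) % (v * q), Nat.mod_lt _ hn0⟩).val + 1) % v =
              ((π ⟨i % (v * q), Nat.mod_lt _ hn0⟩).val + 1) % v) ↔
      (∀ i j : Fin (v * q), (i : ℕ) % v = (j : ℕ) % v →
          ((π i : Fin (v * q)) : ℕ) % v = ((π j : Fin (v * q)) : ℕ) % v) := by
    intro π
    set F : ℕ → ℕ :=
      fun i => (((π ⟨i % (v * q), Nat.mod_lt _ hn0⟩ : Fin (v * q)) : ℕ) + 1) % v with hF
    have hFi : ∀ k : Fin (v * q), F k.val = (((π k : Fin (v * q)) : ℕ) + 1) % v := by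
      intro k
      have hk : (⟨k.val % (v * q), Nat.mod_lt _ hn0⟩ : Fin (v * q)) = k :=
        Fin.ext (Nat.mod_eq_of_lt k.isLt)
      simp only [hF, hk]
    have hFn : ∀ i, F (i + v * q) = F i := by
      intro i
      simp only [hF, Nat.add_mod_right]
    constructor
    · rintro ⟨N, hN0, hNn, hper⟩
      have hFN : ∀ i, F (i + N) = F i := hper
      set d := Nat.gcd N (v * q) with hd
      have hd0 : 0 < d := Nat.gcd_pos_of_pos_left _ hN0
      have hdN : d ≤ N := Nat.le_of_dvd hN0 (Nat.gcd_dvd_left _ _)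
      have hdlt : d < v * q := lt_of_le_of_lt hdN hNn
      have hddvd : d ∣ v * q := Nat.gcd_dvd_right _ _
      obtain ⟨m, -, hm⟩ := Nat.exists_mul_mod_eq_gcd (n := N) (k := v * q) hdlt
      have hFd : ∀ i, F (i + d) = F i := by
        intro i
        have h1 : F (i + m * N) = F i := aux_per F hFN m i
        have h2 : N * m = d + (N * m / (v * q)) * (v * q) := by
          conv_lhs => rw [← Nat.mod_add_div (N * m) (v * q)]
          rw [hm]; ring
        rw [Nat.mul_comm m N, h2, ← Nat.add_assoc] at h1
        rwa [aux_per F hFn _ _] at h1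
      obtain ⟨m', hm'⟩ := hddvd
      -- counting: m' * c = q with c ≥ 1
      have hc2 : ((Finset.range (v * q)).filter (fun i => F i = F 0)).card
          = ((Finset.range (v * q)).filter (fun x => (x + 1) % v = F 0)).card := by
        rw [← Nat.Iio_eq_range, ← Fin.map_valEmbedding_univ, Finset.filter_map,
          Finset.filter_map, Finset.card_map, Finset.card_map]
        apply Finset.card_equiv π
        intro k
        simp only [Finset.mem_filter, Finset.mem_univ, true_and, Function.comp,
          Fin.valEmbedding_apply]
        rw [hFi k]
      have hr : F 0 < v := Nat.mod_lt _ hv0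
      have hc3 : ((Finset.range (v * q)).filter (fun x => (x + 1) % v = F 0)).card = q := by
        set s := (F 0 + (v - 1)) % v with hs'
        have hs : s < v := Nat.mod_lt _ hv0
        have h1 : (s + 1) % v = F 0 := by
          rw [hs', Nat.mod_add_mod]
          have h : F 0 + (v - 1) + 1 = F 0 + v := by omega
          rw [h, Nat.add_mod_right, Nat.mod_eq_of_lt hr]
        have hiff : ∀ x, ((x + 1) % v = F 0 ↔ x % v = s) := by
          intro x
          constructor
          · intro h
            have h2 : (x + 1) % v = (s + 1) % v := by rw [h, h1]
            have h3 := (aux_mod_succ hv0 x s).mp h2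
            rwa [Nat.mod_eq_of_lt hs] at h3
          · intro h
            rw [← h1]
            exact (aux_mod_succ hv0 x s).mpr (by rw [h, Nat.mod_eq_of_lt hs])
        rw [Finset.filter_congr (fun x _ => (hiff x))]
        have hperv : ∀ i : ℕ, (fun x => x % v) (i + v) = (fun x => x % v) i := by
          intro i; simp [Nat.add_mod_right]
        have h4 := aux_count (fun x => x % v) hperv s q
        rw [Nat.mul_comm v q, h4]
        have h5 : (Finset.range v).filter (fun x => x % v = s) = {s} := by
          ext x
          simp only [Finset.mem_filter, Finset.mem_range, Finset.mem_singleton]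
          constructor
          · rintro ⟨hx, h⟩; rwa [Nat.mod_eq_of_lt hx] at h
          · rintro rfl; exact ⟨hs, Nat.mod_eq_of_lt hs⟩
        rw [h5]
        simp
      have hc1 := aux_count F hFd (F 0) m'
      have hrange : v * q = m' * d := by rw [hm', Nat.mul_comm]
      have hcpos : 0 < ((Finset.range d).filter (fun i => F i = F 0)).card := by
        apply Finset.card_pos.mpr
        exact ⟨0, by simp [Finset.mem_filter, Finset.mem_range, hd0]⟩
      have hfinal : m' * ((Finset.range d).filter (fun i => F i = F 0)).card = q := by
        rw [← hc1, ← hrange, hc2, hc3]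
      have hm'dvd : m' ∣ q := ⟨_, hfinal.symm⟩
      have hdv : d = v := by
        rcases hq.eq_one_or_self_of_dvd m' hm'dvd with h1 | h1
        · rw [h1, Nat.one_mul] at hrange
          omega
        · rw [h1] at hm'
          exact (Nat.eq_of_mul_eq_mul_right hq0 hm'.symm).symm ▸ rfl
      have hFv : ∀ i, F (i + v) = F i := by
        intro i; rw [← hdv]; exact hFd i
      have hmodF : ∀ k : ℕ, F k = F (k % v) := by
        intro k
        conv_lhs => rw [← Nat.mod_add_div' k v]
        exact aux_per F hFv _ _
      intro i j hij
      have heq : (((π i : Fin (v * q)) : ℕ) + 1) % v = (((π j : Fin (v * q)) : ℕ) + 1) % v := by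
        rw [← hFi i, ← hFi j, hmodF i.val, hmodF j.val, hij]
      exact (aux_mod_succ hv0 _ _).mp heq
    · intro hπ
      refine ⟨v, hv0, ?_, ?_⟩
      · have h : v * 2 ≤ v * q := Nat.mul_le_mul_left _ hq2
        omega
      · intro i
        have hmm : (⟨(i + v) % (v * q), Nat.mod_lt _ hn0⟩ : Fin (v * q)).val % v
            = (⟨i % (v * q), Nat.mod_lt _ hn0⟩ : Fin (v * q)).val % v := by
          show (i + v) % (v * q) % v = i % (v * q) % v
          rw [Nat.mod_mod_of_dvd _ (dvd_mul_right v q), Nat.mod_mod_of_dvd _ (dvd_mul_right v q),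
            Nat.add_mod_right]
        exact (aux_mod_succ hv0 _ _).mpr (hπ _ _ hmm)
  -- Step 2: conjugate by posE and count
  have hiff2 : ∀ π : Equiv.Perm (Fin (v * q)),
      (∀ i j : Fin (v * q), (i : ℕ) % v = (j : ℕ) % v →
          ((π i : Fin (v * q)) : ℕ) % v = ((π j : Fin (v * q)) : ℕ) % v) ↔
      (∀ x y : Fin v × Fin q, x.1 = y.1 →
          (((posE v q hv0).permCongr π) x).1 = (((posE v q hv0).permCongr π) y).1) := by
    intro π
    have hE1 : ∀ z : Fin (v * q), (((posE v q hv0) z).1 : ℕ) = (z : ℕ) % v := posE_fst v q hv0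
    constructor
    · intro hπ x y h
      have hx : (x.1 : ℕ) = (((posE v q hv0).symm x : Fin (v * q)) : ℕ) % v := by
        conv_lhs => rw [← Equiv.apply_symm_apply (posE v q hv0) x]
        rw [hE1]
      have hy : (y.1 : ℕ) = (((posE v q hv0).symm y : Fin (v * q)) : ℕ) % v := by
        conv_lhs => rw [← Equiv.apply_symm_apply (posE v q hv0) y]
        rw [hE1]
      have h2 : (((posE v q hv0).symm x : Fin (v * q)) : ℕ) % v = (((posE v q hv0).symm y : Fin (v * q)) : ℕ) % v := by
        rw [← hx, ← hy, h]
      have h3 := hπ _ _ h2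
      apply Fin.ext
      simp only [Equiv.permCongr_apply]
      rw [hE1, hE1, h3]
    · intro hρ i j h
      have h2 := hρ ((posE v q hv0) i) ((posE v q hv0) j) (Fin.ext (by rw [hE1, hE1]; exact h))
      simp only [Equiv.permCongr_apply, Equiv.symm_apply_apply] at h2
      have h3 := congrArg Fin.val h2
      rwa [hE1, hE1] at h3
  rw [Nat.card_congr ((Equiv.subtypeEquivRight hCQ).trans
    (Equiv.subtypeEquiv (q := fun ρ : Equiv.Perm (Fin v × Fin q) =>
        ∀ x y : Fin v × Fin q, x.1 = y.1 → (ρ x).1 = (ρ y).1)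
      ((posE v q hv0).permCongr) hiff2))]
  exact count_R v q hv0 hq0

/-- For primes `p = vq + 1` with `q` prime, the number of permutations `π` of
`{1,…,p-1}` whose reduced sequence `π_v` has least period `< p-1` is `v!·(q!)^v`. -/
theorem stmt_7 (p q v : ℕ) (hp : p.Prime) (hq : q.Prime) (hv : 2 ≤ v)
    (hpq : p = v * q + 1) :
    Nat.card {π : Equiv.Perm (Fin (p - 1)) //
        ∃ N : ℕ, 0 < N ∧ N < p - 1 ∧
          ∀ i : ℕ,
            ((π ⟨(i + N) % (p - 1), Nat.mod_lt _ (by have := hp.two_le; omega)⟩).val + 1) % v =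
              ((π ⟨i % (p - 1), Nat.mod_lt _ (by have := hp.two_le; omega)⟩).val + 1) % v} =
      v.factorial * (q.factorial) ^ v := by
  exact key q v (p - 1) hq hv (by omega) (by have := hp.two_le; omega)
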